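/- For any δ > 0 and h > 0, the Lebesgue integral ∫_{{t∈ℝ³ : |t| > δ}} ρ(t)^{−h} dt is finite if and only if Q < h. -/

import Mathlib

open MeasureTheory Set
open scoped ENNReal NNReal

lemma my_prod_smul_left {α β : Type*} [MeasurableSpace α] [MeasurableSpace β]
    (μ : Measure α) (ν : Measure β) [SigmaFinite μ] [SigmaFinite ν] (c : ℝ≥0) :
    ((c : ℝ≥0∞) • μ).prod ν = (c : ℝ≥0∞) • (μ.prod ν) := by
  have : SigmaFinite ((c : ℝ≥0∞) • μ) := by rw [← ENNReal.smul_def]; infer_instance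
  refine Measure.prod_eq fun s t hs ht => ?_
  simp [Measure.prod_prod, mul_assoc]
  simp only [ENNReal.smul_def, smul_eq_mul]

lemma my_prod_smul_right {α β : Type*} [MeasurableSpace α] [MeasurableSpace β]
    (μ : Measure α) (ν : Measure β) [SigmaFinite μ] [SigmaFinite ν] (c : ℝ≥0) :
    μ.prod ((c : ℝ≥0∞) • ν) = (c : ℝ≥0∞) • (μ.prod ν) := by
  have : SigmaFinite ((c : ℝ≥0∞) • ν) := by rw [← ENNReal.smul_def]; infer_instance
  refine Measure.prod_eq fun s t hs ht => ?_
  simp [Measure.prod_prod]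
  simp only [ENNReal.smul_def, smul_eq_mul]
  ring

lemma my_ofReal_smul (x : ℝ) (μ : Measure ℝ) : ENNReal.ofReal x • μ = ((x.toNNReal : ℝ≥0∞)) • μ := rfl

lemma my_map_scale (a b c : ℝ) (ha : 0 < a) (hb : 0 < b) (hc : 0 < c) :
    Measure.map (Prod.map (a * ·) (Prod.map (b * ·) (c * ·))) (volume : Measure (ℝ × ℝ × ℝ))
      = ENNReal.ofReal ((a * b * c)⁻¹) • volume := by
  have h1 : Measure.map (a * ·) (volume : Measure ℝ) = ENNReal.ofReal |a⁻¹| • volume :=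
    Real.map_volume_mul_left ha.ne'
  have h2 : Measure.map (b * ·) (volume : Measure ℝ) = ENNReal.ofReal |b⁻¹| • volume :=
    Real.map_volume_mul_left hb.ne'
  have h3 : Measure.map (c * ·) (volume : Measure ℝ) = ENNReal.ofReal |c⁻¹| • volume :=
    Real.map_volume_mul_left hc.ne'
  have hmb : Measurable (b * ·) := measurable_const_mul b
  have hmc : Measurable (c * ·) := measurable_const_mul c
  have hma : Measurable (a * ·) := measurable_const_mul a
  rw [show (volume : Measure (ℝ × ℝ × ℝ)) = Measure.prod volume (Measure.prod volume volume) by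
      rw [MeasureTheory.Measure.volume_eq_prod, MeasureTheory.Measure.volume_eq_prod]]
  rw [← Measure.map_prod_map _ _ hma (hmb.prodMap hmc), ← Measure.map_prod_map _ _ hmb hmc,
    h1, h2, h3]
  haveI : SigmaFinite ((|a⁻¹|.toNNReal : ℝ≥0∞) • (volume : Measure ℝ)) := by
    rw [← ENNReal.smul_def]; infer_instance
  haveI : SigmaFinite ((|b⁻¹|.toNNReal : ℝ≥0∞) • (volume : Measure ℝ)) := by
    rw [← ENNReal.smul_def]; infer_instance
  haveI : SigmaFinite ((|c⁻¹|.toNNReal : ℝ≥0∞) • (volume : Measure ℝ)) := by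
    rw [← ENNReal.smul_def]; infer_instance
  rw [my_ofReal_smul, my_ofReal_smul, my_ofReal_smul, my_prod_smul_left,
    my_prod_smul_left, my_prod_smul_right, my_prod_smul_right, my_prod_smul_right]
  rw [smul_smul, smul_smul]
  congr 1
  rw [← ENNReal.ofReal, ← ENNReal.ofReal, ← ENNReal.ofReal, ← ENNReal.ofReal_mul (abs_nonneg _),
    ← ENNReal.ofReal_mul (by positivity)]
  congr 1
  rw [abs_of_pos (by positivity), abs_of_pos (by positivity), abs_of_pos (by positivity)]
  field_simp
section Aux2
variable {q1 q2 q3 : ℝ}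

lemma my_rho_cont (hq1 : 0 < q1) (hq2 : 0 < q2) (hq3 : 0 < q3) :
    Continuous fun p : ℝ × ℝ × ℝ => |p.1| ^ q1 + |p.2.1| ^ q2 + |p.2.2| ^ q3 := by
  have habs : ∀ (f : ℝ × ℝ × ℝ → ℝ) (q : ℝ), 0 < q → Continuous f →
      Continuous fun p => |f p| ^ q := by
    intro f q hq hf
    apply Continuous.rpow_const (continuous_abs.comp hf)
    intro p
    right; exact hq.le
  exact ((habs _ _ hq1 continuous_fst).add
    (habs _ _ hq2 (continuous_fst.comp continuous_snd))).add
    (habs _ _ hq3 (continuous_snd.comp continuous_snd))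

lemma my_rho_lt_meas (hq1 : 0 < q1) (hq2 : 0 < q2) (hq3 : 0 < q3) (l : ℝ) :
    MeasurableSet {p : ℝ × ℝ × ℝ | |p.1| ^ q1 + |p.2.1| ^ q2 + |p.2.2| ^ q3 < l} :=
  (isOpen_lt (my_rho_cont hq1 hq2 hq3) continuous_const).measurableSet

lemma my_volume_rho_lt (hq1 : 0 < q1) (hq2 : 0 < q2) (hq3 : 0 < q3) {l : ℝ} (hl : 0 < l) :
    volume {p : ℝ × ℝ × ℝ | |p.1| ^ q1 + |p.2.1| ^ q2 + |p.2.2| ^ q3 < l}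
      = ENNReal.ofReal (l ^ (1/q1 + 1/q2 + 1/q3))
        * volume {p : ℝ × ℝ × ℝ | |p.1| ^ q1 + |p.2.1| ^ q2 + |p.2.2| ^ q3 < 1} := by
  set a := l ^ (1/q1) with hadef
  set b := l ^ (1/q2) with hbdef
  set c := l ^ (1/q3) with hcdef
  have ha : 0 < a := Real.rpow_pos_of_pos hl _
  have hb : 0 < b := Real.rpow_pos_of_pos hl _
  have hc : 0 < c := Real.rpow_pos_of_pos hl _
  have habc : a * b * c = l ^ (1/q1 + 1/q2 + 1/q3) := by
    rw [hadef, hbdef, hcdef, ← Real.rpow_add hl, ← Real.rpow_add hl]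
  set T := Prod.map (a * ·) (Prod.map (b * ·) (c * ·)) with hTdef
  have hpow : ∀ (x q : ℝ), 0 < q → |l ^ (1/q) * x| ^ q = l * |x| ^ q := by
    intro x q hq
    rw [abs_mul, abs_of_pos (Real.rpow_pos_of_pos hl _),
      Real.mul_rpow (Real.rpow_pos_of_pos hl _).le (abs_nonneg _),
      ← Real.rpow_mul hl.le, one_div_mul_cancel hq.ne', Real.rpow_one]
  have hTpre : T ⁻¹' {p : ℝ × ℝ × ℝ | |p.1| ^ q1 + |p.2.1| ^ q2 + |p.2.2| ^ q3 < l}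
      = {p : ℝ × ℝ × ℝ | |p.1| ^ q1 + |p.2.1| ^ q2 + |p.2.2| ^ q3 < 1} := by
    ext p
    simp only [hTdef, mem_preimage, mem_setOf_eq, Prod.map_fst, Prod.map_snd]
    rw [hpow p.1 q1 hq1, hpow p.2.1 q2 hq2, hpow p.2.2 q3 hq3, ← mul_add, ← mul_add,
      mul_lt_iff_lt_one_right hl]
  have hT_meas : Measurable T :=
    (measurable_const_mul a).prodMap ((measurable_const_mul b).prodMap (measurable_const_mul c))
  have happ : (Measure.map T volume) {p : ℝ × ℝ × ℝ | |p.1| ^ q1 + |p.2.1| ^ q2 + |p.2.2| ^ q3 < l}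
      = volume {p : ℝ × ℝ × ℝ | |p.1| ^ q1 + |p.2.1| ^ q2 + |p.2.2| ^ q3 < 1} := by
    rw [Measure.map_apply hT_meas (my_rho_lt_meas hq1 hq2 hq3 l), hTpre]
  rw [my_map_scale a b c ha hb hc, Measure.smul_apply, smul_eq_mul] at happ
  rw [← happ, ← mul_assoc, habc, ← ENNReal.ofReal_mul (Real.rpow_pos_of_pos hl _).le,
    mul_inv_cancel₀ (Real.rpow_pos_of_pos hl _).ne', ENNReal.ofReal_one, one_mul]
end Aux2
section Aux3

lemma my_lint_aux {p M : ℝ} (hM : 0 < M) :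
    ∫⁻ s in Ioc (0:ℝ) M, ENNReal.ofReal (s ^ p)
      = ∫⁻ s in Ioo (0:ℝ) M, ENNReal.ofReal (s ^ p) := by
  rw [Measure.restrict_congr_set Ioo_ae_eq_Ioc]

lemma my_lint_rpow_lt_top {p M : ℝ} (hM : 0 < M) (hp : -1 < p) :
    ∫⁻ s in Ioc (0:ℝ) M, ENNReal.ofReal (s ^ p) < ⊤ := by
  rw [my_lint_aux hM]
  have hmeas : Measurable fun s : ℝ => s ^ p := measurable_id.pow measurable_const
  have hnn : 0 ≤ᵐ[volume.restrict (Ioo (0:ℝ) M)] fun s => s ^ p := by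
    filter_upwards [ae_restrict_mem measurableSet_Ioo] with s hs using Real.rpow_nonneg hs.1.le p
  rw [lt_top_iff_ne_top,
    lintegral_ofReal_ne_top_iff_integrable hmeas.aestronglyMeasurable hnn]
  exact (intervalIntegral.integrableOn_Ioo_rpow_iff hM).2 hp

lemma my_lint_rpow_eq_top {p M : ℝ} (hM : 0 < M) (hp : p ≤ -1) :
    ∫⁻ s in Ioc (0:ℝ) M, ENNReal.ofReal (s ^ p) = ⊤ := by
  rw [my_lint_aux hM]
  by_contra h'
  have hmeas : Measurable fun s : ℝ => s ^ p := measurable_id.pow measurable_const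
  have hnn : 0 ≤ᵐ[volume.restrict (Ioo (0:ℝ) M)] fun s => s ^ p := by
    filter_upwards [ae_restrict_mem measurableSet_Ioo] with s hs using Real.rpow_nonneg hs.1.le p
  have hint := (lintegral_ofReal_ne_top_iff_integrable hmeas.aestronglyMeasurable hnn).1 h'
  have := (intervalIntegral.integrableOn_Ioo_rpow_iff hM).1 hint
  linarith

lemma my_cube_fin (r : ℝ) :
    volume (Icc (-r) r ×ˢ (Icc (-r) r ×ˢ Icc (-r) r) : Set (ℝ × ℝ × ℝ)) < ⊤ := by
  rw [show (volume : Measure (ℝ × ℝ × ℝ)) = Measure.prod volume (Measure.prod volume volume) by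
      rw [MeasureTheory.Measure.volume_eq_prod, MeasureTheory.Measure.volume_eq_prod],
    Measure.prod_prod, Measure.prod_prod, Real.volume_Icc]
  exact ENNReal.mul_lt_top ENNReal.ofReal_lt_top
    (ENNReal.mul_lt_top ENNReal.ofReal_lt_top ENNReal.ofReal_lt_top)

end Aux3
theorem stmt_4 (q1 q2 q3 : ℝ) (hq1 : 0 < q1) (hq2 : 0 < q2) (hq3 : 0 < q3)
    (δ h : ℝ) (hδ : 0 < δ) (hh : 0 < h) :
    (∫⁻ t in {t : ℝ × ℝ × ℝ | max (max |t.1| |t.2.1|) |t.2.2| > δ},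
        ENNReal.ofReal ((|t.1| ^ q1 + |t.2.1| ^ q2 + |t.2.2| ^ q3) ^ (-h))) < ⊤ ↔
      1 / q1 + 1 / q2 + 1 / q3 < h := by
  set Q : ℝ := 1/q1 + 1/q2 + 1/q3 with hQdef
  have hQpos : 0 < Q := by positivity
  set S : Set (ℝ × ℝ × ℝ) := {t : ℝ × ℝ × ℝ | max (max |t.1| |t.2.1|) |t.2.2| > δ} with hSdef
  set ρ : ℝ × ℝ × ℝ → ℝ := fun t => |t.1| ^ q1 + |t.2.1| ^ q2 + |t.2.2| ^ q3 with hρdef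
  show (∫⁻ t in S, ENNReal.ofReal (ρ t ^ (-h))) < ⊤ ↔ Q < h
  have hρ_cont : Continuous ρ := my_rho_cont hq1 hq2 hq3
  have hρ_nn : ∀ t, 0 ≤ ρ t := by
    intro t
    have h1 := Real.rpow_nonneg (abs_nonneg t.1) q1
    have h2 := Real.rpow_nonneg (abs_nonneg t.2.1) q2
    have h3 := Real.rpow_nonneg (abs_nonneg t.2.2) q3
    simp only [hρdef]; linarith
  have hf_meas : Measurable fun t => ρ t ^ (-h) := hρ_cont.measurable.pow measurable_const
  have hS_meas : MeasurableSet S := by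
    have hcont : Continuous fun t : ℝ × ℝ × ℝ => max (max |t.1| |t.2.1|) |t.2.2| :=
      ((continuous_fst.abs.max (continuous_fst.comp continuous_snd).abs).max
        (continuous_snd.comp continuous_snd).abs)
    exact (isOpen_lt continuous_const hcont).measurableSet
  set c := volume {p : ℝ × ℝ × ℝ | |p.1| ^ q1 + |p.2.1| ^ q2 + |p.2.2| ^ q3 < 1} with hcdef
  have hc_ne : c ≠ 0 := by
    refine (isOpen_lt (my_rho_cont hq1 hq2 hq3) continuous_const).measure_ne_zero volume ?_
    refine ⟨(0, 0, 0), ?_⟩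
    simp [Real.zero_rpow hq1.ne', Real.zero_rpow hq2.ne', Real.zero_rpow hq3.ne']
  have hc_fin : c < ⊤ := by
    refine lt_of_le_of_lt (measure_mono ?_) (my_cube_fin 1)
    rintro ⟨x, y, z⟩ hp
    simp only [mem_setOf_eq] at hp
    have n1 := Real.rpow_nonneg (abs_nonneg x) q1
    have n2 := Real.rpow_nonneg (abs_nonneg y) q2
    have n3 := Real.rpow_nonneg (abs_nonneg z) q3
    have key : ∀ w q : ℝ, 0 < q → |w| ^ q < 1 → |w| ≤ 1 := by
      intro w q hq hw
      by_contra hcon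
      push_neg at hcon
      exact absurd hw (not_lt.2 (Real.one_le_rpow hcon.le hq.le))
    exact ⟨abs_le.1 (key x q1 hq1 (by linarith)),
      abs_le.1 (key y q2 hq2 (by linarith)), abs_le.1 (key z q3 hq3 (by linarith))⟩
  have hscale : ∀ {l : ℝ}, 0 < l →
      volume {p : ℝ × ℝ × ℝ | ρ p < l} = ENNReal.ofReal (l ^ Q) * c :=
    fun hl => my_volume_rho_lt hq1 hq2 hq3 hl
  set c0 : ℝ := min (δ ^ q1) (min (δ ^ q2) (δ ^ q3)) with hc0def
  have hc0_pos : 0 < c0 := lt_min (Real.rpow_pos_of_pos hδ _)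
    (lt_min (Real.rpow_pos_of_pos hδ _) (Real.rpow_pos_of_pos hδ _))
  have hc0_le : ∀ t ∈ S, c0 ≤ ρ t := by
    rintro ⟨x, y, z⟩ ht
    simp only [hSdef, mem_setOf_eq, gt_iff_lt, lt_max_iff] at ht
    have n1 := Real.rpow_nonneg (abs_nonneg x) q1
    have n2 := Real.rpow_nonneg (abs_nonneg y) q2
    have n3 := Real.rpow_nonneg (abs_nonneg z) q3
    simp only [hρdef]
    rcases ht with (h1 | h2) | h3
    · have e1 : δ ^ q1 ≤ |x| ^ q1 := Real.rpow_le_rpow hδ.le h1.le hq1.le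
      have e2 : c0 ≤ δ ^ q1 := min_le_left _ _
      linarith
    · have e1 : δ ^ q2 ≤ |y| ^ q2 := Real.rpow_le_rpow hδ.le h2.le hq2.le
      have e2 : c0 ≤ δ ^ q2 := (min_le_right _ _).trans (min_le_left _ _)
      linarith
    · have e1 : δ ^ q3 ≤ |z| ^ q3 := Real.rpow_le_rpow hδ.le h3.le hq3.le
      have e2 : c0 ≤ δ ^ q3 := (min_le_right _ _).trans (min_le_right _ _)
      linarith
  have hlayer : (∫⁻ t in S, ENNReal.ofReal (ρ t ^ (-h)))
      = ∫⁻ s in Ioi (0:ℝ), (volume.restrict S) {a | s < ρ a ^ (-h)} :=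
    lintegral_eq_lintegral_meas_lt (volume.restrict S)
      (Filter.Eventually.of_forall fun t => Real.rpow_nonneg (hρ_nn t) _) hf_meas.aemeasurable
  set D : ℝ → ℝ≥0∞ := fun s => (volume.restrict S) {a | s < ρ a ^ (-h)} with hDdef
  have hD_anti : Antitone D := fun s s' hss' =>
    measure_mono fun a ha => lt_of_le_of_lt hss' ha
  have hD_meas : Measurable D := hD_anti.measurable
  have hkey : ∀ s : ℝ, 0 < s → D s = volume ({p : ℝ × ℝ × ℝ | ρ p < s ^ (-(1/h))} ∩ S) := by
    intro s hs
    have hmbl : MeasurableSet {a : ℝ × ℝ × ℝ | s < ρ a ^ (-h)} :=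
      measurableSet_lt measurable_const hf_meas
    rw [hDdef]
    simp only
    rw [Measure.restrict_apply hmbl]
    congr 1
    ext t
    simp only [mem_inter_iff, mem_setOf_eq]
    refine and_congr_left fun htS => ?_
    have hρt : 0 < ρ t := lt_of_lt_of_le hc0_pos (hc0_le t htS)
    have hr : (0:ℝ) < s ^ (-(1/h)) := Real.rpow_pos_of_pos hs _
    have hexp : (s ^ (-(1/h))) ^ (-h) = s := by
      rw [← Real.rpow_mul hs.le, show (-(1/h)) * (-h) = 1 by field_simp, Real.rpow_one]
    conv_lhs => rw [← hexp]
    exact Real.rpow_lt_rpow_iff_of_neg hr hρt (neg_lt_zero.2 hh)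
  have hr_eq : ∀ s : ℝ, 0 < s →
      ENNReal.ofReal ((s ^ (-(1/h))) ^ Q) = ENNReal.ofReal (s ^ (-(Q/h))) := by
    intro s hs
    congr 1
    rw [← Real.rpow_mul hs.le]
    congr 1
    ring
  have hDle : ∀ s : ℝ, 0 < s → D s ≤ ENNReal.ofReal (s ^ (-(Q/h))) * c := by
    intro s hs
    calc D s = volume ({p : ℝ × ℝ × ℝ | ρ p < s ^ (-(1/h))} ∩ S) := hkey s hs
      _ ≤ volume {p : ℝ × ℝ × ℝ | ρ p < s ^ (-(1/h))} := measure_mono inter_subset_left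
      _ = ENNReal.ofReal ((s ^ (-(1/h))) ^ Q) * c := hscale (Real.rpow_pos_of_pos hs _)
      _ = ENNReal.ofReal (s ^ (-(Q/h))) * c := by rw [hr_eq s hs]
  have hDge : ∀ s : ℝ, 0 < s → ENNReal.ofReal (s ^ (-(Q/h))) * c ≤ D s + volume Sᶜ := by
    intro s hs
    have hsub : {p : ℝ × ℝ × ℝ | ρ p < s ^ (-(1/h))}
        ⊆ ({p : ℝ × ℝ × ℝ | ρ p < s ^ (-(1/h))} ∩ S) ∪ Sᶜ := by
      intro t ht
      by_cases htS : t ∈ S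
      · exact Or.inl ⟨ht, htS⟩
      · exact Or.inr htS
    calc ENNReal.ofReal (s ^ (-(Q/h))) * c
        = volume {p : ℝ × ℝ × ℝ | ρ p < s ^ (-(1/h))} := by
          rw [hscale (Real.rpow_pos_of_pos hs _), hr_eq s hs]
      _ ≤ volume (({p : ℝ × ℝ × ℝ | ρ p < s ^ (-(1/h))} ∩ S) ∪ Sᶜ) := measure_mono hsub
      _ ≤ volume ({p : ℝ × ℝ × ℝ | ρ p < s ^ (-(1/h))} ∩ S) + volume Sᶜ := measure_union_le _ _
      _ = D s + volume Sᶜ := by rw [hkey s hs]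
  have hScompl_fin : volume Sᶜ < ⊤ := by
    refine lt_of_le_of_lt (measure_mono ?_) (my_cube_fin δ)
    rintro ⟨x, y, z⟩ hp
    simp only [hSdef, mem_compl_iff, mem_setOf_eq, gt_iff_lt, not_lt] at hp
    obtain ⟨⟨h1, h2⟩, h3⟩ : (|x| ≤ δ ∧ |y| ≤ δ) ∧ |z| ≤ δ := by
      constructor
      · exact max_le_iff.1 ((le_max_left _ _).trans hp)
      · exact (le_max_right _ _).trans hp
    exact ⟨abs_le.1 h1, abs_le.1 h2, abs_le.1 h3⟩
  rw [hlayer]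
  constructor
  · intro hfin
    by_contra hQh
    push_neg at hQh
    have hp : -(Q/h) ≤ -1 := by
      have : 1 ≤ Q / h := (one_le_div hh).2 hQh
      linarith
    have htop : (∫⁻ s in Ioc (0:ℝ) 1, ENNReal.ofReal (s ^ (-(Q/h))) * c) = ⊤ := by
      rw [lintegral_mul_const c (f := fun s : ℝ => ENNReal.ofReal (s ^ (-(Q/h))))
          ((measurable_id.pow measurable_const).ennreal_ofReal),
        my_lint_rpow_eq_top one_pos hp, ENNReal.top_mul hc_ne]
    have hle : (∫⁻ s in Ioc (0:ℝ) 1, ENNReal.ofReal (s ^ (-(Q/h))) * c)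
        ≤ (∫⁻ s in Ioc (0:ℝ) 1, D s) + volume Sᶜ * volume (Ioc (0:ℝ) 1) := by
      calc (∫⁻ s in Ioc (0:ℝ) 1, ENNReal.ofReal (s ^ (-(Q/h))) * c)
          ≤ ∫⁻ s in Ioc (0:ℝ) 1, (D s + volume Sᶜ) :=
            setLIntegral_mono (hD_meas.add measurable_const) fun s hs => hDge s hs.1
        _ = (∫⁻ s in Ioc (0:ℝ) 1, D s) + volume Sᶜ * volume (Ioc (0:ℝ) 1) := by
            rw [lintegral_add_right _ measurable_const, setLIntegral_const]
    have hIoc_top : (∫⁻ s in Ioc (0:ℝ) 1, D s) = ⊤ := by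
      by_contra hne
      have hfin2 : (∫⁻ s in Ioc (0:ℝ) 1, D s) + volume Sᶜ * volume (Ioc (0:ℝ) 1) < ⊤ :=
        ENNReal.add_lt_top.2 ⟨lt_top_iff_ne_top.2 hne,
          ENNReal.mul_lt_top hScompl_fin (by rw [Real.volume_Ioc]; exact ENNReal.ofReal_lt_top)⟩
      rw [htop] at hle
      exact absurd (lt_of_le_of_lt hle hfin2) (lt_irrefl ⊤)
    have : (∫⁻ s in Ioi (0:ℝ), D s) = ⊤ :=
      top_le_iff.1 (hIoc_top ▸ lintegral_mono_set (fun x hx => hx.1))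
    rw [this] at hfin
    exact absurd hfin (lt_irrefl ⊤)
  · intro hQh
    set M : ℝ := c0 ^ (-h) with hMdef
    have hM_pos : 0 < M := Real.rpow_pos_of_pos hc0_pos _
    have hvanish : ∀ s : ℝ, M ≤ s → D s = 0 := by
      intro s hsM
      have hs : 0 < s := lt_of_lt_of_le hM_pos hsM
      rw [hkey s hs]
      have hsub : {p : ℝ × ℝ × ℝ | ρ p < s ^ (-(1/h))} ∩ S = ∅ := by
        ext t
        simp only [mem_inter_iff, mem_setOf_eq, mem_empty_iff_false, iff_false, not_and]
        intro hlt htS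
        have hz : -(1/h) < 0 := by
          rw [neg_lt_zero]
          positivity
        have h1 : s ^ (-(1/h)) ≤ M ^ (-(1/h)) :=
          (Real.rpow_le_rpow_iff_of_neg hs hM_pos hz).2 hsM
        have h2 : M ^ (-(1/h)) = c0 := by
          rw [hMdef, ← Real.rpow_mul hc0_pos.le, show (-h) * (-(1/h)) = 1 by field_simp,
            Real.rpow_one]
        exact absurd (lt_of_lt_of_le hlt (h1.trans_eq h2)) (not_lt.2 (hc0_le t htS))
      rw [hsub]
      exact measure_empty
    rw [← Ioc_union_Ioi_eq_Ioi hM_pos.le, lintegral_union measurableSet_Ioi Ioc_disjoint_Ioi_same]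
    have hzero : (∫⁻ s in Ioi M, D s) = 0 := by
      rw [setLIntegral_congr_fun measurableSet_Ioi
        (fun s hs => hvanish s (le_of_lt hs))]
      exact lintegral_zero
    rw [hzero, add_zero]
    have hp : (-1:ℝ) < -(Q/h) := by
      have : Q / h < 1 := (div_lt_one hh).2 hQh
      linarith
    calc (∫⁻ s in Ioc (0:ℝ) M, D s)
        ≤ ∫⁻ s in Ioc (0:ℝ) M, ENNReal.ofReal (s ^ (-(Q/h))) * c :=
          setLIntegral_mono ((measurable_id.pow measurable_const).ennreal_ofReal.mul_const c)
            fun s hs => hDle s hs.1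
      _ = (∫⁻ s in Ioc (0:ℝ) M, ENNReal.ofReal (s ^ (-(Q/h)))) * c :=
          lintegral_mul_const c (f := fun s : ℝ => ENNReal.ofReal (s ^ (-(Q/h))))
            ((measurable_id.pow measurable_const).ennreal_ofReal)
      _ < ⊤ := ENNReal.mul_lt_top (my_lint_rpow_lt_top hM_pos hp) hc_fin
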